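/- arXiv:1806.06884 — 3 statements merged into one kernel-verified Lean document; each statement's English description precedes it below -/
import Mathlib

section
/- Let n ≥ 2 and let z_1, …, z_n be real numbers with z_1 + z_2 + ⋯ + z_n = 0. Suppose that every proper partial sum is negative, i.e. v_k := z_1 + ⋯ + z_k < 0 for all 1 ≤ k ≤ n−1. Then ∑_{k=1}^{n-1} (k(n−k)/2)·exp(z_{k+1} − z_k) > n(n²−1)/12. -/
private lemma sum_shift (m : ℕ) (f : ℕ → ℝ) :
    ∑ k ∈ Finset.Icc 1 m, f k = ∑ j ∈ Finset.range m, f (j + 1) := by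
  rw [show Finset.Icc 1 m = Finset.Ico 1 (m + 1) by rfl, Finset.sum_Ico_eq_sum_range]
  simp [add_comm]

private lemma weight_sum (c : ℝ) (m : ℕ) :
    ∑ j ∈ Finset.range m, (((j : ℝ) + 1) * (c - ((j : ℝ) + 1)) / 2)
      = (m : ℝ) * ((m : ℝ) + 1) * (3 * c - 2 * (m : ℝ) - 1) / 12 := by
  induction m with
  | zero => simp
  | succ m ih => rw [Finset.sum_range_succ, ih]; push_cast; ring

private lemma abel_id (c : ℝ) (z V : ℕ → ℝ) (hV0 : V 0 = 0)
    (hV : ∀ k, V (k + 1) = V k + z (k + 1)) (m : ℕ) :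
    ∑ j ∈ Finset.range m,
        (((j : ℝ) + 1) * (c - ((j : ℝ) + 1)) / 2) * (z (j + 2) - z (j + 1))
      = -∑ j ∈ Finset.range m, V (j + 1)
        - (((m : ℝ) + 1) * (c - ((m : ℝ) + 1)) / 2) * V m
        + ((m : ℝ) * (c - (m : ℝ)) / 2) * V (m + 1) := by
  induction m with
  | zero => simp [hV0]
  | succ m ih =>
    rw [Finset.sum_range_succ, ih, Finset.sum_range_succ]
    have e1 : z (m + 2) = V (m + 2) - V (m + 1) := by rw [hV (m + 1)]; ring
    have e2 : z (m + 1) = V (m + 1) - V m := by rw [hV m]; ring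
    rw [e1, e2]
    push_cast
    ring

/-- Core quantitative inequality (strict version) in the proof of the main theorem:
if `z 1 + ⋯ + z n = 0` and all proper partial sums are negative, then the weighted
sum of exponentials of consecutive differences strictly exceeds `n(n²-1)/12`. -/
theorem stmt_0 (n : ℕ) (hn : 2 ≤ n) (z : ℕ → ℝ)
    (hsum : ∑ k ∈ Finset.Icc 1 n, z k = 0)
    (hneg : ∀ k, 1 ≤ k → k ≤ n - 1 → ∑ l ∈ Finset.Icc 1 k, z l < 0) :
    ∑ k ∈ Finset.Icc 1 (n - 1),
        ((k : ℝ) * ((n : ℝ) - (k : ℝ)) / 2) * Real.exp (z (k + 1) - z k)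
      > (n : ℝ) * ((n : ℝ) ^ 2 - 1) / 12 := by
  set V : ℕ → ℝ := fun k => ∑ j ∈ Finset.range k, z (j + 1) with hVdef
  obtain ⟨m, rfl⟩ : ∃ m, n = m + 1 := ⟨n - 1, by omega⟩
  have hm : 1 ≤ m := by omega
  have hmn : (m + 1) - 1 = m := by omega
  rw [hmn]
  have hV0 : V 0 = 0 := by simp [hVdef]
  have hV : ∀ k, V (k + 1) = V k + z (k + 1) := by
    intro k; simp [hVdef, Finset.sum_range_succ]
  have hVn : V (m + 1) = 0 := by
    rw [hVdef]; rw [sum_shift (m + 1) z] at hsum; exact hsum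
  have hVneg : ∀ j < m, V (j + 1) < 0 := by
    intro j hj
    have := hneg (j + 1) (by omega) (by omega)
    rwa [sum_shift (j + 1) z] at this
  -- rewrite goal sum over range m
  rw [sum_shift m (fun k => ((k : ℝ) * (((m : ℕ) + 1 : ℕ) - (k : ℝ)) / 2) * Real.exp (z (k + 1) - z k))]
  set c : ℝ := ((m + 1 : ℕ) : ℝ) with hc
  have hcm : c = (m : ℝ) + 1 := by rw [hc]; push_cast; ring
  -- weight nonneg and exp bound termwise
  have hstep : ∀ j ∈ Finset.range m,
      (((j : ℝ) + 1) * (c - ((j : ℝ) + 1)) / 2) * (1 + (z (j + 2) - z (j + 1)))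
        ≤ (((j + 1 : ℕ) : ℝ) * (c - ((j + 1 : ℕ) : ℝ)) / 2) * Real.exp (z (j + 1 + 1) - z (j + 1)) := by
    intro j hj
    have hj' : (j : ℝ) + 1 ≤ (m : ℝ) := by
      have := Finset.mem_range.mp hj
      exact_mod_cast Nat.succ_le_of_lt this
    have hw : 0 ≤ ((j : ℝ) + 1) * (c - ((j : ℝ) + 1)) / 2 := by
      have : (0:ℝ) ≤ c - ((j : ℝ) + 1) := by rw [hcm]; linarith
      positivity
    have hexp := Real.add_one_le_exp (z (j + 2) - z (j + 1))
    have : (((j : ℝ) + 1) * (c - ((j : ℝ) + 1)) / 2) * (1 + (z (j + 2) - z (j + 1)))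
        ≤ (((j : ℝ) + 1) * (c - ((j : ℝ) + 1)) / 2) * Real.exp (z (j + 2) - z (j + 1)) := by
      apply mul_le_mul_of_nonneg_left _ hw
      linarith
    convert this using 3 <;> push_cast <;> ring
  have hsum_le := Finset.sum_le_sum hstep
  -- the lower-bound sum splits
  have hsplit : ∑ j ∈ Finset.range m,
      (((j : ℝ) + 1) * (c - ((j : ℝ) + 1)) / 2) * (1 + (z (j + 2) - z (j + 1)))
      = (∑ j ∈ Finset.range m, (((j : ℝ) + 1) * (c - ((j : ℝ) + 1)) / 2))
        + ∑ j ∈ Finset.range m,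
            (((j : ℝ) + 1) * (c - ((j : ℝ) + 1)) / 2) * (z (j + 2) - z (j + 1)) := by
    rw [← Finset.sum_add_distrib]
    apply Finset.sum_congr rfl
    intro j _; ring
  have habel := abel_id c z V hV0 hV m
  have hcoef : ((m : ℝ) + 1) * (c - ((m : ℝ) + 1)) / 2 = 0 := by rw [hcm]; ring
  have hlin : ∑ j ∈ Finset.range m,
      (((j : ℝ) + 1) * (c - ((j : ℝ) + 1)) / 2) * (z (j + 2) - z (j + 1))
      = -∑ j ∈ Finset.range m, V (j + 1) := by
    rw [habel, hVn, hcoef]; ring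
  have hpos : 0 < -∑ j ∈ Finset.range m, V (j + 1) := by
    have h1 : ∑ j ∈ Finset.range m, V (j + 1) < 0 := by
      apply Finset.sum_neg
      · intro j hj; exact hVneg j (Finset.mem_range.mp hj)
      · exact Finset.nonempty_range_iff.mpr (by omega)
    linarith
  have hW := weight_sum c m
  have hWval : (m : ℝ) * ((m : ℝ) + 1) * (3 * c - 2 * (m : ℝ) - 1) / 12
      = c * (c ^ 2 - 1) / 12 := by rw [hcm]; ring
  have hgoal : c * (c ^ 2 - 1) / 12
      < ∑ j ∈ Finset.range m,
          (((j + 1 : ℕ) : ℝ) * (c - ((j + 1 : ℕ) : ℝ)) / 2) * Real.exp (z (j + 1 + 1) - z (j + 1)) := by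
    calc c * (c ^ 2 - 1) / 12
        < c * (c ^ 2 - 1) / 12 + (-∑ j ∈ Finset.range m, V (j + 1)) := by linarith
      _ = ∑ j ∈ Finset.range m,
            (((j : ℝ) + 1) * (c - ((j : ℝ) + 1)) / 2) * (1 + (z (j + 2) - z (j + 1))) := by
          rw [hsplit, hlin, hW, hWval]
      _ ≤ _ := hsum_le
  exact hgoal
end

section
/- Let n ≥ 2 and let z_1, …, z_n be real numbers with z_1 + z_2 + ⋯ + z_n = 0. Suppose that v_k := z_1 + ⋯ + z_k ≤ 0 for all 1 ≤ k ≤ n−1. Then ∑_{k=1}^{n-1} (k(n−k)/2)·exp(z_{k+1} − z_k) ≥ n(n²−1)/12. -/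
open Finset

private lemma sumA (z : ℕ → ℝ) (m : ℕ) :
    ∑ k ∈ Icc 1 m, (k:ℝ) * (z (k+1) - z k)
      = (m:ℝ) * z (m+1) - ∑ l ∈ Icc 1 m, z l := by
  induction m with
  | zero => simp
  | succ m ih =>
    rw [Finset.sum_Icc_succ_top (by omega : 1 ≤ m+1),
        Finset.sum_Icc_succ_top (by omega : 1 ≤ m+1) z, ih]
    push_cast; ring

private lemma claimId (z : ℕ → ℝ) (m : ℕ) :
    ∑ k ∈ Icc 1 m, ((k:ℝ) * (((m:ℝ)+1) - k) / 2) * (z (k+1) - z k)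
      = -∑ k ∈ Icc 1 m, (∑ l ∈ Icc 1 k, z l)
        + ((m:ℝ)/2) * (∑ l ∈ Icc 1 (m+1), z l) := by
  induction m with
  | zero => simp
  | succ m ih =>
    have h1 : ∑ k ∈ Icc 1 (m+1), ((k:ℝ) * ((((m+1:ℕ)):ℝ)+1 - k) / 2) * (z (k+1) - z k)
        = (∑ k ∈ Icc 1 m, ((k:ℝ) * (((m:ℝ)+1) - k) / 2) * (z (k+1) - z k))
          + (1/2) * (∑ k ∈ Icc 1 m, (k:ℝ) * (z (k+1) - z k))
          + ((((m:ℝ))+1+1 - ((m:ℝ)+1)) / 2 * ((m:ℝ)+1)) * (z (m+2) - z (m+1)) := by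
      rw [Finset.sum_Icc_succ_top (by omega : 1 ≤ m+1)]
      rw [show (∑ k ∈ Icc 1 m, ((k:ℝ) * ((((m+1:ℕ)):ℝ)+1 - k) / 2) * (z (k+1) - z k))
          = ∑ k ∈ Icc 1 m, (((k:ℝ) * (((m:ℝ)+1) - k) / 2) * (z (k+1) - z k)
              + (1/2) * ((k:ℝ) * (z (k+1) - z k))) from
        Finset.sum_congr rfl (fun k hk => by push_cast; ring)]
      rw [Finset.sum_add_distrib, ← Finset.mul_sum]
      push_cast; ring
    rw [h1, ih, sumA]
    rw [Finset.sum_Icc_succ_top (by omega : 1 ≤ m+1) (fun k => ∑ l ∈ Icc 1 k, z l),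
        Finset.sum_Icc_succ_top (by omega : 1 ≤ m+2) z,
        Finset.sum_Icc_succ_top (by omega : 1 ≤ m+1) z]
    push_cast; ring

private lemma sumId (m : ℕ) : ∑ k ∈ Icc 1 m, (k:ℝ) = (m:ℝ)*((m:ℝ)+1)/2 := by
  induction m with
  | zero => simp
  | succ m ih =>
    rw [Finset.sum_Icc_succ_top (by omega : 1 ≤ m+1), ih]
    push_cast; ring

private lemma sumSq (m : ℕ) : ∑ k ∈ Icc 1 m, (k:ℝ)^2 = (m:ℝ)*((m:ℝ)+1)*(2*(m:ℝ)+1)/6 := by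
  induction m with
  | zero => simp
  | succ m ih =>
    rw [Finset.sum_Icc_succ_top (by omega : 1 ≤ m+1), ih]
    push_cast; ring

private lemma sumW (m : ℕ) :
    ∑ k ∈ Icc 1 m, ((k:ℝ) * (((m:ℝ)+1) - k) / 2)
      = ((m:ℝ)+1)*(((m:ℝ)+1)^2-1)/12 := by
  rw [show (∑ k ∈ Icc 1 m, ((k:ℝ) * (((m:ℝ)+1) - k) / 2))
      = ∑ k ∈ Icc 1 m, ((((m:ℝ)+1)/2) * (k:ℝ) - (k:ℝ)^2/2) from
    Finset.sum_congr rfl (fun k hk => by ring)]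
  rw [Finset.sum_sub_distrib, ← Finset.mul_sum, sumId]
  rw [show (∑ k ∈ Icc 1 m, (k:ℝ)^2/2) = (∑ k ∈ Icc 1 m, (k:ℝ)^2)/2 by
    rw [Finset.sum_div], sumSq]
  ring

/-- Core quantitative inequality (non-strict version): if `z 1 + ⋯ + z n = 0` and all
proper partial sums are nonpositive, then the weighted sum of exponentials of
consecutive differences is at least `n(n²-1)/12`. -/
theorem stmt_1 (n : ℕ) (hn : 2 ≤ n) (z : ℕ → ℝ)
    (hsum : ∑ k ∈ Finset.Icc 1 n, z k = 0)
    (hneg : ∀ k, 1 ≤ k → k ≤ n - 1 → ∑ l ∈ Finset.Icc 1 k, z l ≤ 0) :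
    ∑ k ∈ Finset.Icc 1 (n - 1),
        ((k : ℝ) * ((n : ℝ) - (k : ℝ)) / 2) * Real.exp (z (k + 1) - z k)
      ≥ (n : ℝ) * ((n : ℝ) ^ 2 - 1) / 12 := by
  obtain ⟨m, rfl⟩ : ∃ m, n = m + 1 := ⟨n - 1, by omega⟩
  simp only [Nat.add_sub_cancel] at *
  -- nonnegativity of the linear term
  have hkey : 0 ≤ ∑ k ∈ Icc 1 m, ((k:ℝ) * (((m:ℝ)+1) - k) / 2) * (z (k+1) - z k) := by
    rw [claimId z m, hsum, mul_zero, add_zero, neg_nonneg]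
    apply Finset.sum_nonpos
    intro k hk
    simp only [Finset.mem_Icc] at hk
    exact hneg k hk.1 hk.2
  have hW := sumW m
  have hstep : ∑ k ∈ Icc 1 m, ((k:ℝ) * (((m:ℝ)+1) - k) / 2)
        + ∑ k ∈ Icc 1 m, ((k:ℝ) * (((m:ℝ)+1) - k) / 2) * (z (k+1) - z k)
      ≤ ∑ k ∈ Icc 1 m, ((k:ℝ) * (((m:ℝ)+1) - k) / 2) * Real.exp (z (k+1) - z k) := by
    rw [← Finset.sum_add_distrib]
    apply Finset.sum_le_sum
    intro k hk
    simp only [Finset.mem_Icc] at hk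
    have hr : 0 ≤ (k:ℝ) * (((m:ℝ)+1) - k) / 2 := by
      have h1 : (0:ℝ) ≤ (k:ℝ) := by positivity
      have h2 : (k:ℝ) ≤ (m:ℝ) + 1 := by
        exact_mod_cast Nat.le_succ_of_le hk.2
      have h3 : (0:ℝ) ≤ ((m:ℝ)+1) - k := by linarith
      positivity
    have hexp := Real.add_one_le_exp (z (k+1) - z k)
    nlinarith [mul_le_mul_of_nonneg_left hexp hr]
  have hcast : ((m+1:ℕ):ℝ) = (m:ℝ) + 1 := by push_cast; ring
  rw [ge_iff_le, hcast]
  calc ((m:ℝ)+1) * (((m:ℝ)+1)^2 - 1) / 12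
      = ∑ k ∈ Icc 1 m, ((k:ℝ) * (((m:ℝ)+1) - k) / 2) := hW.symm
    _ ≤ ∑ k ∈ Icc 1 m, ((k:ℝ) * (((m:ℝ)+1) - k) / 2)
        + ∑ k ∈ Icc 1 m, ((k:ℝ) * (((m:ℝ)+1) - k) / 2) * (z (k+1) - z k) := by linarith
    _ ≤ ∑ k ∈ Icc 1 m, ((k:ℝ) * (((m:ℝ)+1) - k) / 2) * Real.exp (z (k+1) - z k) := hstep
end

section
/- Let n ≥ 2 and let z_1, …, z_n be real numbers with z_1 + z_2 + ⋯ + z_n = 0 and v_k := z_1 + ⋯ + z_k ≤ 0 for all 1 ≤ k ≤ n−1. If ∑_{k=1}^{n-1} (k(n−k)/2)·exp(z_{k+1} − z_k) = n(n²−1)/12, then z_k = 0 for all 1 ≤ k ≤ n. -/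
open Finset

lemma aux_sumR (n : ℕ) : ∀ m : ℕ,
    ∑ k ∈ Icc 1 m, (k : ℝ) * ((n : ℝ) - (k : ℝ)) / 2
      = (m : ℝ) * ((m : ℝ) + 1) * (3 * (n : ℝ) - 2 * (m : ℝ) - 1) / 12 := by
  intro m
  induction m with
  | zero => simp
  | succ m ih =>
    rw [Finset.sum_Icc_succ_top (by omega), ih]
    push_cast
    ring

lemma aux_abel (n : ℕ) (V : ℕ → ℝ) (hV0 : V 0 = 0) : ∀ m : ℕ,
    ∑ k ∈ Icc 1 m, (k : ℝ) * ((n : ℝ) - (k : ℝ)) / 2 * (V (k+1) - 2 * V k + V (k-1))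
      = (m : ℝ) * ((n : ℝ) - (m : ℝ)) / 2 * V (m+1)
        - ((m : ℝ) + 1) * ((n : ℝ) - ((m : ℝ) + 1)) / 2 * V m
        - ∑ k ∈ Icc 1 m, V k := by
  intro m
  induction m with
  | zero => simp [hV0]
  | succ m ih =>
    rw [Finset.sum_Icc_succ_top (by omega), Finset.sum_Icc_succ_top (by omega), ih]
    simp only [Nat.add_sub_cancel]
    push_cast
    ring

/-- Equality case of the core inequality: equality in the weighted exponential
inequality forces all `z k` to vanish. -/
theorem stmt_2 (n : ℕ) (hn : 2 ≤ n) (z : ℕ → ℝ)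
    (hsum : ∑ k ∈ Finset.Icc 1 n, z k = 0)
    (hneg : ∀ k, 1 ≤ k → k ≤ n - 1 → ∑ l ∈ Finset.Icc 1 k, z l ≤ 0)
    (heq : ∑ k ∈ Finset.Icc 1 (n - 1),
        ((k : ℝ) * ((n : ℝ) - (k : ℝ)) / 2) * Real.exp (z (k + 1) - z k)
      = (n : ℝ) * ((n : ℝ) ^ 2 - 1) / 12) :
    ∀ k, 1 ≤ k → k ≤ n → z k = 0 := by
  set V : ℕ → ℝ := fun k => ∑ l ∈ Finset.Icc 1 k, z l with hVdef
  have hV0 : V 0 = 0 := by simp [hVdef]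
  have hVn : V n = 0 := hsum
  have hVsucc : ∀ k : ℕ, V (k + 1) = V k + z (k + 1) := by
    intro k
    simp only [hVdef]
    rw [Finset.sum_Icc_succ_top (by omega)]
  have hz : ∀ k : ℕ, 1 ≤ k → z k = V k - V (k - 1) := by
    intro k hk
    obtain ⟨j, rfl⟩ : ∃ j, k = j + 1 := ⟨k - 1, by omega⟩
    rw [hVsucc]
    simp
  have hD : ∀ k ∈ Icc 1 (n-1), z (k+1) - z k = V (k+1) - 2 * V k + V (k-1) := by
    intro k hk
    simp only [mem_Icc] at hk
    rw [hz (k+1) (by omega), hz k hk.1]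
    simp only [Nat.add_sub_cancel]
    ring
  have key : ∑ k ∈ Icc 1 (n-1), (k:ℝ)*((n:ℝ)-(k:ℝ))/2 * (1 + (V (k+1) - 2*V k + V (k-1)))
      ≤ ∑ k ∈ Icc 1 (n-1), (k:ℝ)*((n:ℝ)-(k:ℝ))/2 * Real.exp (V (k+1) - 2*V k + V (k-1)) := by
    apply Finset.sum_le_sum
    intro k hk
    simp only [mem_Icc] at hk
    have hk2 : (k:ℝ) ≤ (n:ℝ) := by exact_mod_cast Nat.le_trans hk.2 (by omega)
    have hR : (0:ℝ) ≤ (k:ℝ)*((n:ℝ)-(k:ℝ))/2 :=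
      div_nonneg (mul_nonneg (Nat.cast_nonneg k) (by linarith)) (by norm_num)
    apply mul_le_mul_of_nonneg_left _ hR
    rw [add_comm]
    exact Real.add_one_le_exp _
  have heq' : ∑ k ∈ Icc 1 (n-1), (k:ℝ)*((n:ℝ)-(k:ℝ))/2 * Real.exp (V (k+1) - 2*V k + V (k-1))
      = (n:ℝ)*((n:ℝ)^2-1)/12 := by
    rw [← heq]
    apply Finset.sum_congr rfl
    intro k hk
    rw [hD k hk]
  have hL : ∑ k ∈ Icc 1 (n-1), (k:ℝ)*((n:ℝ)-(k:ℝ))/2 * (1 + (V (k+1) - 2*V k + V (k-1)))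
      = (n:ℝ)*((n:ℝ)^2-1)/12 - ∑ k ∈ Icc 1 (n-1), V k := by
    have split : ∑ k ∈ Icc 1 (n-1), (k:ℝ)*((n:ℝ)-(k:ℝ))/2 * (1 + (V (k+1) - 2*V k + V (k-1)))
        = (∑ k ∈ Icc 1 (n-1), (k:ℝ)*((n:ℝ)-(k:ℝ))/2)
          + ∑ k ∈ Icc 1 (n-1), (k:ℝ)*((n:ℝ)-(k:ℝ))/2 * (V (k+1) - 2*V k + V (k-1)) := by
      rw [← Finset.sum_add_distrib]
      apply Finset.sum_congr rfl
      intro k _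
      ring
    rw [split, aux_sumR, aux_abel n V hV0]
    have h1 : n - 1 + 1 = n := by omega
    have h2 : ((n-1:ℕ):ℝ) = (n:ℝ) - 1 := by
      rw [Nat.cast_sub (by omega)]; norm_num
    rw [h1, hVn, h2]
    ring
  have hTnonpos : ∑ k ∈ Icc 1 (n-1), V k ≤ 0 := by
    apply Finset.sum_nonpos
    intro k hk
    simp only [mem_Icc] at hk
    exact hneg k hk.1 hk.2
  have hTzero : ∑ k ∈ Icc 1 (n-1), V k = 0 := by
    have : (n:ℝ)*((n:ℝ)^2-1)/12 - ∑ k ∈ Icc 1 (n-1), V k ≤ (n:ℝ)*((n:ℝ)^2-1)/12 := by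
      rw [← hL, ← heq']; exact key
    linarith
  have hVzero : ∀ k ∈ Icc 1 (n-1), V k = 0 := by
    rw [← Finset.sum_eq_zero_iff_of_nonpos]
    · exact hTzero
    · intro k hk
      simp only [mem_Icc] at hk
      exact hneg k hk.1 hk.2
  have hVall : ∀ k ≤ n, V k = 0 := by
    intro k hk
    rcases Nat.eq_or_lt_of_le hk with rfl | hlt
    · exact hVn
    · rcases Nat.eq_zero_or_pos k with rfl | hpos
      · exact hV0
      · exact hVzero k (mem_Icc.mpr ⟨hpos, by omega⟩)
  intro k hk1 hkn
  rw [hz k hk1, hVall k hkn, hVall (k-1) (by omega)]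
  ring
end
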